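/- For N = 4 qubits, if the 2×2 conditions 8 p_0 p_2 ≥ 3 p_1^2 and 8 p_2 p_4 ≥ 3 p_3^2 and 9 p_1 p_3 ≥ 4 p_2^2 hold together with p_4(72 p_0 p_2 − 27 p_1^2) − 2 p_2^3 − 9 p_3 (p_1 p_2 + 3 p_0 p_3) ≥ 0, then the partial transpose of ρ_DS = Σ p_k |D_k^4⟩⟨D_k^4| with respect to the 1|3 partition is also positive semidefinite (PPT region for 2|2 is contained in PPT region for 1|3). -/

import Mathlib

open scoped BigOperators

noncomputable section

/-- Number of ones (excitations) in an `N`-bit string. -/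
def ones {N : ℕ} (f : Fin N → Fin 2) : ℕ :=
  (Finset.univ.filter fun i => f i = 1).card

/-- The Dicke state `|D_k^N⟩` as a real vector in `(ℂ²)^{⊗N}` (it has real coordinates). -/
def dicke (N k : ℕ) : (Fin N → Fin 2) → ℝ :=
  fun f => if ones f = k then (Real.sqrt (N.choose k))⁻¹ else 0

/-- The rank-one projector `|D_k^N⟩⟨D_k^N|`. -/
def dickeProj (N k : ℕ) : Matrix (Fin N → Fin 2) (Fin N → Fin 2) ℝ :=
  fun x y => dicke N k x * dicke N k y

/-- The diagonal symmetric state `ρ_DS = ∑_k p_k |D_k^N⟩⟨D_k^N|`. -/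
def rhoDS (N : ℕ) (p : ℕ → ℝ) : Matrix (Fin N → Fin 2) (Fin N → Fin 2) ℝ :=
  ∑ k ∈ Finset.range (N + 1), p k • dickeProj N k

/-- Partial transpose with respect to the first `t` qubits. -/
def ptrans (N t : ℕ) (M : Matrix (Fin N → Fin 2) (Fin N → Fin 2) ℝ) :
    Matrix (Fin N → Fin 2) (Fin N → Fin 2) ℝ :=
  fun x y => M (fun i => if (i : ℕ) < t then y i else x i)
               (fun i => if (i : ℕ) < t then x i else y i)

/-- The `n × n` Hankel matrix with `(i,j)` entry `p (i + j + k)`. -/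
def hankel (p : ℕ → ℝ) (k n : ℕ) : Matrix (Fin n) (Fin n) ℝ :=
  fun i j => p ((i : ℕ) + (j : ℕ) + k)

/-! ### Auxiliary machinery -/

lemma ones_lt5 : ∀ f : Fin 4 → Fin 2, ones f < 5 := by decide

lemma ones_mix : ∀ x y : Fin 4 → Fin 2,
    ones (fun i : Fin 4 => if (i : ℕ) < 1 then y i else x i)
      = (y 0 : ℕ) + ones (Fin.tail x) := by decide

lemma ones_tail_lt4 : ∀ f : Fin 4 → Fin 2, ones (Fin.tail f) < 4 := by decide

/-- Entry formula for `rhoDS`. -/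
lemma rhoDS_apply (p : ℕ → ℝ) (x y : Fin 4 → Fin 2) :
    rhoDS 4 p x y
      = if ones x = ones y then p (ones x) / (Nat.choose 4 (ones x) : ℝ) else 0 := by
  have hx5 : ones x < 5 := ones_lt5 x
  have hC : (0:ℝ) < (Nat.choose 4 (ones x) : ℝ) := by
    exact_mod_cast Nat.choose_pos (by omega : ones x ≤ 4)
  unfold rhoDS
  simp only [Matrix.sum_apply, Matrix.smul_apply, smul_eq_mul]
  unfold dickeProj dicke
  rw [Finset.sum_eq_single (ones x)]
  · by_cases h : ones y = ones x
    · simp [h, ← mul_inv, Real.mul_self_sqrt hC.le, div_eq_mul_inv]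
    · have h' : ¬ ones x = ones y := fun hh => h hh.symm
      simp [h, h']
  · intro k _ hne
    simp [Ne.symm hne]
  · intro h; exact absurd (Finset.mem_range.2 hx5) h

/-- The class of a basis string: its first bit together with the number of ones of the rest. -/
def cls (x : Fin 4 → Fin 2) : Fin 2 × Fin 4 :=
  (x 0, ⟨ones (Fin.tail x), ones_tail_lt4 x⟩)

/-- The 8×8 compressed matrix of the partial transpose. -/
def Nmat (p : ℕ → ℝ) : Matrix (Fin 2 × Fin 4) (Fin 2 × Fin 4) ℝ :=
  fun c d => if (d.1 : ℕ) + (c.2 : ℕ) = (c.1 : ℕ) + (d.2 : ℕ)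
    then p ((d.1 : ℕ) + (c.2 : ℕ)) / (Nat.choose 4 ((d.1 : ℕ) + (c.2 : ℕ)) : ℝ) else 0

/-- The aggregation (indicator) matrix. -/
def Amat : Matrix (Fin 2 × Fin 4) (Fin 4 → Fin 2) ℝ :=
  fun c x => if cls x = c then 1 else 0

lemma quad_nonneg {a b c x y : ℝ} (ha : 0 ≤ a) (hc : 0 ≤ c) (h : b ^ 2 ≤ a * c) :
    0 ≤ a * x ^ 2 + 2 * b * x * y + c * y ^ 2 := by
  rcases ha.lt_or_eq with h' | h'
  · nlinarith [sq_nonneg (a * x + b * y), sq_nonneg y]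
  · have hb : b = 0 := by nlinarith [sq_nonneg b]
    rw [hb, ← h']
    nlinarith [sq_nonneg y]

lemma Nmat_herm (p : ℕ → ℝ) : (Nmat p).IsHermitian := by
  ext c d
  simp only [Matrix.conjTranspose_apply, Nmat, star_trivial]
  by_cases h : (c.1 : ℕ) + (d.2 : ℕ) = (d.1 : ℕ) + (c.2 : ℕ)
  · rw [if_pos h, if_pos h.symm, h]
  · rw [if_neg h, if_neg (fun hh => h hh.symm)]

lemma Nmat_posSemidef (p : ℕ → ℝ) (hp : ∀ k, 0 ≤ p k)
    (hE1 : 8 * p 0 * p 2 - 3 * p 1 ^ 2 ≥ 0)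
    (hE2 : 9 * p 1 * p 3 - 4 * p 2 ^ 2 ≥ 0)
    (hE3 : 8 * p 2 * p 4 - 3 * p 3 ^ 2 ≥ 0) :
    (Nmat p).PosSemidef := by
  refine Matrix.posSemidef_iff_dotProduct_mulVec.mpr ⟨Nmat_herm p, fun v => ?_⟩
  simp only [dotProduct, Matrix.mulVec, Nmat, star_trivial,
    Fintype.sum_prod_type, Fin.sum_univ_two, Fin.sum_univ_four,
    show ((0:Fin 4):ℕ) = 0 from rfl, show ((1:Fin 4):ℕ) = 1 from rfl,
    show ((2:Fin 4):ℕ) = 2 from rfl, show ((3:Fin 4):ℕ) = 3 from rfl,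
    show ((0:Fin 2):ℕ) = 0 from rfl, show ((1:Fin 2):ℕ) = 1 from rfl,
    show Nat.choose 4 0 = 1 from rfl, show Nat.choose 4 1 = 4 from rfl,
    show Nat.choose 4 2 = 6 from rfl, show Nat.choose 4 3 = 4 from rfl,
    show Nat.choose 4 4 = 1 from rfl]
  norm_num
  have h1 : 0 ≤ p 0 * (v 0) ^ 2 + 2 * (p 1 / 4) * (v 0) * (v 1) + p 2 / 6 * (v 1) ^ 2 :=
    quad_nonneg (hp 0) (by linarith [hp 2]) (by nlinarith)
  have h2 : 0 ≤ p 1 / 4 * (v (0, 1)) ^ 2 + 2 * (p 2 / 6) * (v (0, 1)) * (v (1, 2))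
      + p 3 / 4 * (v (1, 2)) ^ 2 :=
    quad_nonneg (by linarith [hp 1]) (by linarith [hp 3]) (by nlinarith)
  have h3 : 0 ≤ p 2 / 6 * (v (0, 2)) ^ 2 + 2 * (p 3 / 4) * (v (0, 2)) * (v (1, 3))
      + p 4 * (v (1, 3)) ^ 2 :=
    quad_nonneg (by linarith [hp 2]) (hp 4) (by nlinarith)
  have h4 : 0 ≤ p 1 / 4 * (v (1, 0)) ^ 2 := mul_nonneg (by linarith [hp 1]) (sq_nonneg _)
  have h5 : 0 ≤ p 3 / 4 * (v (0, 3)) ^ 2 := mul_nonneg (by linarith [hp 3]) (sq_nonneg _)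
  change 0 ≤ p 0 * (v (0, 0)) ^ 2 + 2 * (p 1 / 4) * (v (0, 0)) * (v (1, 1)) + p 2 / 6 * (v (1, 1)) ^ 2 at h1
  nlinarith [h1, h2, h3, h4, h5]

/-- The partial transpose factors through the 8×8 compressed matrix. -/
lemma ptrans_factor (p : ℕ → ℝ) :
    ptrans 4 1 (rhoDS 4 p) = Amat.conjTranspose * Nmat p * Amat := by
  ext x y
  have hrhs : (Amat.conjTranspose * Nmat p * Amat) x y = Nmat p (cls x) (cls y) := by
    rw [Matrix.mul_apply, Finset.sum_eq_single (cls y)]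
    · rw [Matrix.mul_apply, Finset.sum_eq_single (cls x)]
      · simp [Amat, Matrix.conjTranspose_apply]
      · intro c _ hne
        simp [Amat, Matrix.conjTranspose_apply, Ne.symm hne]
      · intro h; exact absurd (Finset.mem_univ _) h
    · intro d _ hne
      simp [Amat, Ne.symm hne]
    · intro h; exact absurd (Finset.mem_univ _) h
  rw [hrhs]
  show rhoDS 4 p _ _ = _
  rw [rhoDS_apply, ones_mix x y, ones_mix y x]
  simp [Nmat, cls]
  rfl

/-- For `N = 4` qubits, if `8p₀p₂ ≥ 3p₁²`, `9p₁p₃ ≥ 4p₂²`, `8p₂p₄ ≥ 3p₃²`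
and `p₄(72p₀p₂ - 27p₁²) - 2p₂³ - 9p₃(p₁p₂ + 3p₀p₃) ≥ 0` (i.e. `ρ_DS` is PPT w.r.t. the
`2|2` partition), then the partial transpose of `ρ_DS = ∑ p_k |D_k^4⟩⟨D_k^4|` w.r.t. the
`1|3` partition is also positive semidefinite. -/
theorem stmt16 (p : ℕ → ℝ) (hp : ∀ k, 0 ≤ p k)
    (hsum : ∑ k ∈ Finset.range 5, p k = 1)
    (hE1 : 8 * p 0 * p 2 - 3 * p 1 ^ 2 ≥ 0)
    (hE2 : 9 * p 1 * p 3 - 4 * p 2 ^ 2 ≥ 0)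
    (hE3 : 8 * p 2 * p 4 - 3 * p 3 ^ 2 ≥ 0)
    (hF2 : p 4 * (72 * p 0 * p 2 - 27 * p 1 ^ 2) - 2 * p 2 ^ 3
        - 9 * p 3 * (p 1 * p 2 + 3 * p 0 * p 3) ≥ 0) :
    (ptrans 4 1 (rhoDS 4 p)).PosSemidef := by
  rw [ptrans_factor p]
  exact (Nmat_posSemidef p hp hE1 hE2 hE3).conjTranspose_mul_mul_same Amat
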